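/- Let A and B be symmetric linear operators in a real or complex Hilbert space H, and let 𝒟 be a dense subspace of H contained in the domains of A, B, AB, BA, A², and B², such that A B x = B A x for all x ∈ 𝒟. If the restriction of A² + B² to 𝒟 is essentially selfadjoint, then the restrictions of A and B to 𝒟 are essentially selfadjoint, and moreover for all real numbers a, b the restriction of a A + b B to 𝒟 is essentially selfadjoint. -/

import Mathlib

open LinearPMap

/-- The product (composition) `A ∘ B` of two partially defined linear operators,
with domain `{x ∈ dom B : B x ∈ dom A}`, defined via its graph. -/
noncomputable def LinearPMap.pcomp {R E F G : Type*} [Ring R] [AddCommGroup E] [Module R E]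
    [AddCommGroup F] [Module R F] [AddCommGroup G] [Module R G]
    (A : F →ₗ.[R] G) (B : E →ₗ.[R] F) : E →ₗ.[R] G :=
  Submodule.toLinearPMap
    { carrier := {p : E × G | ∃ y : F, (p.1, y) ∈ B.graph ∧ (y, p.2) ∈ A.graph}
      add_mem' := fun ⟨y, hy1, hy2⟩ ⟨z, hz1, hz2⟩ =>
        ⟨y + z, B.graph.add_mem hy1 hz1, A.graph.add_mem hy2 hz2⟩
      zero_mem' := ⟨0, B.graph.zero_mem, A.graph.zero_mem⟩
      smul_mem' := fun c _ ⟨y, hy1, hy2⟩ =>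
        ⟨c • y, B.graph.smul_mem c hy1, A.graph.smul_mem c hy2⟩ }

/-- The `n`-th power of a partially defined linear operator, with its natural domain:
`A⁰ = I` on all of `E` and `dom Aⁿ⁺¹ = {x ∈ dom Aⁿ : Aⁿ x ∈ dom A}`. -/
noncomputable def LinearPMap.ppow {R E : Type*} [Ring R] [AddCommGroup E] [Module R E]
    (A : E →ₗ.[R] E) : ℕ → E →ₗ.[R] E
  | 0 => (LinearMap.id : E →ₗ[R] E).toPMap ⊤
  | n + 1 => A.pcomp (A.ppow n)

/-- A partially defined operator `A` in a Hilbert space is symmetric if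
`⟪A x, y⟫ = ⟪x, A y⟫` for all `x, y` in its domain. -/
def LinearPMap.IsSymmetricOp {𝕜 H : Type*} [RCLike 𝕜] [NormedAddCommGroup H]
    [InnerProductSpace 𝕜 H] (A : H →ₗ.[𝕜] H) : Prop :=
  ∀ x y : A.domain, inner (𝕜 := 𝕜) (A x) (y : H) = inner (𝕜 := 𝕜) (x : H) (A y)

/-- A partially defined operator `A` in a Hilbert space is selfadjoint if it is densely
defined and `A* = A`. -/
def LinearPMap.IsSelfAdjointOp {𝕜 H : Type*} [RCLike 𝕜] [NormedAddCommGroup H]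
    [InnerProductSpace 𝕜 H] [CompleteSpace H] (A : H →ₗ.[𝕜] H) : Prop :=
  Dense (A.domain : Set H) ∧ A.adjoint = A

/-- An operator `A` in a Hilbert space is essentially selfadjoint if it is closable and its
closure is a densely defined selfadjoint operator. -/
def LinearPMap.IsEssSelfAdjointOp {𝕜 H : Type*} [RCLike 𝕜] [NormedAddCommGroup H]
    [InnerProductSpace 𝕜 H] [CompleteSpace H] (A : H →ₗ.[𝕜] H) : Prop :=
  A.IsClosable ∧ Dense (A.closure.domain : Set H) ∧ A.closure.adjoint = A.closure

section Helpers

open Filter Topology RCLike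

namespace LinearPMap

variable {𝕜 H : Type*} [RCLike 𝕜] [NormedAddCommGroup H] [InnerProductSpace 𝕜 H]

variable {A B : H →ₗ.[𝕜] H}

theorem graph_val {f : H →ₗ.[𝕜] H} {x y : H} (h : (x, y) ∈ f.graph) (hx : x ∈ f.domain) :
    f ⟨x, hx⟩ = y :=
  f.mem_graph_snd_inj (f.mem_graph ⟨x, hx⟩) h rfl

theorem pcomp_graph_mem_iff {p : H × H} :
    p ∈ (A.pcomp B).graph ↔ ∃ y : H, (p.1, y) ∈ B.graph ∧ (y, p.2) ∈ A.graph := by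
  rw [LinearPMap.pcomp, Submodule.toLinearPMap_graph_eq]
  · exact Iff.rfl
  · rintro ⟨x1, x2⟩ ⟨y, hy1, hy2⟩ h0
    dsimp only at h0 ⊢
    subst h0
    have hy0 : y = 0 := B.graph_fst_eq_zero_snd hy1 rfl
    subst hy0
    exact A.graph_fst_eq_zero_snd hy2 rfl

theorem mem_pcomp_domain {x : H} (hx : x ∈ (A.pcomp B).domain) :
    ∃ hB : x ∈ B.domain, B ⟨x, hB⟩ ∈ A.domain := by
  obtain ⟨z, hz⟩ := mem_domain_iff.mp hx
  obtain ⟨y, hy1, hy2⟩ := pcomp_graph_mem_iff.mp hz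
  have hB : x ∈ B.domain := mem_domain_of_mem_graph hy1
  refine ⟨hB, ?_⟩
  rw [graph_val hy1 hB]
  exact mem_domain_of_mem_graph hy2

theorem pcomp_apply (x : (A.pcomp B).domain) (hB : (x : H) ∈ B.domain)
    (hA : B ⟨x, hB⟩ ∈ A.domain) :
    (A.pcomp B) x = A ⟨B ⟨(x : H), hB⟩, hA⟩ := by
  have hg := (A.pcomp B).mem_graph x
  obtain ⟨y, hy1, hy2⟩ := pcomp_graph_mem_iff.mp hg
  have hBy : B ⟨(x : H), hB⟩ = y := graph_val hy1 hB
  have := graph_val hy2 (hBy ▸ hA)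
  dsimp only at this
  rw [← this]
  congr 1
  exact Subtype.ext hBy.symm

end LinearPMap

end Helpers

section Helpers2

open Filter Topology RCLike

namespace LinearPMap

variable {𝕜 H : Type*} [RCLike 𝕜] [NormedAddCommGroup H] [InnerProductSpace 𝕜 H]
  [CompleteSpace H]

local notation "⟪" x ", " y "⟫" => @inner 𝕜 _ _ x y

variable {T : H →ₗ.[𝕜] H}

theorem adjoint_graph_mem_iff (hd : Dense (T.domain : Set H)) {u w : H} :
    (u, w) ∈ T.adjoint.graph ↔ ∀ x : T.domain, ⟪w, (x : H)⟫ = ⟪u, T x⟫ := by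
  constructor
  · intro h x
    have hu : u ∈ T.adjoint.domain := mem_domain_of_mem_graph h
    have hval : T.adjoint ⟨u, hu⟩ = w := graph_val h hu
    rw [← hval]
    exact adjoint_isFormalAdjoint hd ⟨u, hu⟩ x
  · intro h
    have hu : u ∈ T.adjoint.domain :=
      mem_adjoint_domain_of_exists u ⟨w, fun x => h x⟩
    have : T.adjoint ⟨u, hu⟩ = w := adjoint_apply_eq hd ⟨u, hu⟩ fun x => h x
    have := T.adjoint.mem_graph ⟨u, hu⟩
    rwa [adjoint_apply_eq hd ⟨u, hu⟩ fun x => h x] at this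

theorem adjoint_isClosed' (hd : Dense (T.domain : Set H)) : T.adjoint.IsClosed := by
  have : (T.adjoint.graph : Set (H × H)) =
      ⋂ x : T.domain, {p : H × H | ⟪p.2, (x : H)⟫ = ⟪p.1, T x⟫} := by
    ext ⟨u, w⟩
    simp only [Set.mem_iInter, Set.mem_setOf_eq, SetLike.mem_coe]
    exact adjoint_graph_mem_iff hd
  rw [LinearPMap.IsClosed, this]
  exact isClosed_iInter fun x => isClosed_eq
    (Continuous.inner (continuous_snd) continuous_const)
    (Continuous.inner (continuous_fst) continuous_const)

theorem isClosable_of_symmetric (hd : Dense (T.domain : Set H)) (hsymm : T.IsSymmetricOp) :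
    T.IsClosable := by
  have hfa : T.IsFormalAdjoint T := fun x y => hsymm x y
  exact isClosable_iff_exists_closed_extension.mpr
    ⟨T.adjoint, adjoint_isClosed' hd, hfa.le_adjoint hd⟩

/-- Every point of the graph of the closure is the limit of a sequence in the graph. -/
theorem closure_graph_seq (hT : T.IsClosable) {u w : H} (h : (u, w) ∈ T.closure.graph) :
    ∃ d : ℕ → T.domain, Tendsto (fun n => ((d n : H), T (d n))) atTop (𝓝 (u, w)) := by
  rw [← hT.graph_closure_eq_closure_graph] at h
  have h' : (u, w) ∈ _root_.closure (T.graph : Set (H × H)) := by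
    rwa [← Submodule.topologicalClosure_coe, SetLike.mem_coe]
  obtain ⟨g, hg, hlim⟩ := mem_closure_iff_seq_limit.mp h'
  have : ∀ n, ∃ x : T.domain, ((x : H), T x) = g n := fun n => (T.mem_graph_iff').mp (hg n)
  choose d hd using this
  exact ⟨d, by simpa only [hd] using hlim⟩

end LinearPMap

end Helpers2

section Helpers3

open Filter Topology RCLike

namespace LinearPMap

variable {𝕜 H : Type*} [RCLike 𝕜] [NormedAddCommGroup H] [InnerProductSpace 𝕜 H]
  [CompleteSpace H]

local notation "⟪" x ", " y "⟫" => @inner 𝕜 _ _ x y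

variable {N : H →ₗ.[𝕜] H}

theorem resolvent_lower_bound
    (hNpos : ∀ x : N.domain, 0 ≤ re ⟪N x, (x : H)⟫) {t : ℝ} (ht : 0 < t) (x : N.domain) :
    ‖(x : H)‖ ≤ ‖(x : H) + (t : 𝕜) • N x‖ := by
  have h1 : re ⟪(x : H), N x⟫ = re ⟪N x, (x : H)⟫ := by
    rw [← inner_conj_symm (N x) (x : H), conj_re]
  have h2 : re ⟪(x : H), (t : 𝕜) • N x⟫ = t * re ⟪(x : H), N x⟫ := by
    rw [inner_smul_right, re_ofReal_mul]
  have hp := hNpos x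
  have hsq : ‖(x : H)‖ ^ 2 ≤ ‖(x : H) + (t : 𝕜) • N x‖ ^ 2 := by
    rw [@norm_add_sq 𝕜]
    nlinarith [sq_nonneg ‖(t : 𝕜) • N x‖]
  nlinarith [norm_nonneg ((x : H) + (t : 𝕜) • N x), norm_nonneg (x : H)]

theorem resolvent_surjective (hNdense : Dense (N.domain : Set H))
    (hNclosed : N.IsClosed) (hNadj : N.adjoint = N)
    (hNpos : ∀ x : N.domain, 0 ≤ re ⟪N x, (x : H)⟫)
    {t : ℝ} (ht : 0 < t) (y : H) :
    ∃ x : N.domain, (x : H) + (t : 𝕜) • N x = y := by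
  set M : N.domain →ₗ[𝕜] H := N.domain.subtype + (t : 𝕜) • N.toFun with hM
  have hMapp : ∀ x : N.domain, M x = (x : H) + (t : 𝕜) • N x := fun x => rfl
  have hlow : ∀ x : N.domain, ‖(x : H)‖ ≤ ‖M x‖ := fun x => by
    rw [hMapp]; exact resolvent_lower_bound hNpos ht x
  -- the range of M is closed
  have hclosed : _root_.IsClosed ((LinearMap.range M : Submodule 𝕜 H) : Set H) := by
    refine IsSeqClosed.isClosed ?_
    intro s y hs hy
    have hex : ∀ n, ∃ x : N.domain, M x = s n := fun n => by
      obtain ⟨x, hx⟩ := hs n; exact ⟨x, hx⟩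
    choose x hx using hex
    have hcauchy : CauchySeq fun n => (x n : H) := by
      have hsc : CauchySeq s := hy.cauchySeq
      rw [Metric.cauchySeq_iff] at hsc ⊢
      intro ε hε
      obtain ⟨Nn, hN⟩ := hsc ε hε
      refine ⟨Nn, fun m hm n hn => ?_⟩
      have h1 := hlow (x m - x n)
      have : M (x m - x n) = s m - s n := by
        rw [show M (x m - x n) = M (x m) - M (x n) from _root_.map_sub M _ _, hx, hx]
      rw [this] at h1
      calc dist ((x m : H)) ((x n : H)) = ‖(x m : H) - (x n : H)‖ := dist_eq_norm _ _
        _ ≤ ‖s m - s n‖ := by simpa using h1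
        _ = dist (s m) (s n) := (dist_eq_norm _ _).symm
        _ < ε := hN m hm n hn
    obtain ⟨u, hu⟩ := cauchySeq_tendsto_of_complete hcauchy
    have hNx : Tendsto (fun n => N (x n)) atTop (𝓝 ((t : 𝕜)⁻¹ • (y - u))) := by
      have h1 : ∀ n, N (x n) = (t : 𝕜)⁻¹ • (s n - (x n : H)) := fun n => by
        rw [← hx n, hMapp, add_sub_cancel_left, inv_smul_smul₀]
        exact_mod_cast ne_of_gt ht
      simp_rw [h1]
      exact ((hy.sub hu).const_smul _)
    have hmem : (u, (t : 𝕜)⁻¹ • (y - u)) ∈ N.graph := by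
      have : Tendsto (fun n => ((x n : H), N (x n))) atTop (𝓝 (u, (t : 𝕜)⁻¹ • (y - u))) :=
        hu.prodMk_nhds hNx
      have hmemn : ∀ n, ((x n : H), N (x n)) ∈ (N.graph : Set (H × H)) :=
        fun n => N.mem_graph (x n)
      exact hNclosed.mem_of_tendsto this (Filter.Eventually.of_forall hmemn)
    have hu' : u ∈ N.domain := mem_domain_of_mem_graph hmem
    refine ⟨⟨u, hu'⟩, ?_⟩
    rw [hMapp, graph_val hmem hu', smul_inv_smul₀ (by exact_mod_cast ne_of_gt ht)]
    abel
  -- the orthogonal complement of the range is trivial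
  have horth : (LinearMap.range M)ᗮ = ⊥ := by
    rw [Submodule.eq_bot_iff]
    intro u hu
    rw [Submodule.mem_orthogonal] at hu
    have ht' : (t : 𝕜) ≠ 0 := by exact_mod_cast ne_of_gt ht
    have hval : ∀ x : N.domain, ⟪u, N x⟫ = ⟪-((t : 𝕜)⁻¹) • u, (x : H)⟫ := by
      intro x
      have h0 : ⟪M x, u⟫ = 0 := hu (M x) (LinearMap.mem_range_self M x)
      rw [hMapp] at h0
      rw [inner_add_left, inner_smul_left] at h0
      have h0' : ⟪u, (x : H)⟫ + (t : 𝕜) * ⟪u, N x⟫ = 0 := by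
        have := congrArg (starRingEnd 𝕜) h0
        simpa [inner_conj_symm, map_add, map_mul, conj_ofReal] using this
      rw [inner_smul_left]
      have hconj : (starRingEnd 𝕜) (-((t : 𝕜)⁻¹)) = -((t : 𝕜)⁻¹) := by
        simp [map_inv₀, conj_ofReal]
      rw [hconj]
      field_simp
      linear_combination h0'
    have humem : u ∈ N.adjoint.domain :=
      mem_adjoint_domain_of_exists u ⟨-((t : 𝕜)⁻¹) • u, fun x => (hval x).symm⟩
    have hgg : N.adjoint.graph = N.graph := by rw [hNadj]
    have hgr : (u, N.adjoint ⟨u, humem⟩) ∈ N.graph := by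
      rw [← hgg]; exact N.adjoint.mem_graph ⟨u, humem⟩
    have hadval : N.adjoint ⟨u, humem⟩ = -((t : 𝕜)⁻¹) • u :=
      adjoint_apply_eq hNdense ⟨u, humem⟩ fun x => (hval x).symm
    have hu' : u ∈ N.domain := mem_domain_of_mem_graph hgr
    have hNu : N ⟨u, hu'⟩ = -((t : 𝕜)⁻¹) • u := by
      rw [graph_val hgr hu', hadval]
    have hpos := hNpos ⟨u, hu'⟩
    rw [hNu] at hpos
    have hre : re ⟪-((t : 𝕜)⁻¹) • u, u⟫ = -(t⁻¹ * ‖u‖ ^ 2) := by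
      rw [inner_smul_left]
      have hconj : (starRingEnd 𝕜) (-((t : 𝕜)⁻¹)) = -((t : 𝕜)⁻¹) := by
        simp [map_inv₀, conj_ofReal]
      rw [hconj, inner_self_eq_norm_sq_to_K]
      have : -((t : 𝕜)⁻¹) * (‖u‖ : 𝕜) ^ 2 = ((-(t⁻¹ * ‖u‖ ^ 2) : ℝ) : 𝕜) := by
        push_cast; ring
      rw [this, ofReal_re]
    rw [hre] at hpos
    have hti : 0 < t⁻¹ := inv_pos.mpr ht
    have hsq : ‖u‖ ^ 2 ≤ 0 := by nlinarith
    have h0 : ‖u‖ = 0 := by nlinarith [norm_nonneg u]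
    exact norm_eq_zero.mp h0
  -- conclude surjectivity
  have : LinearMap.range M = ⊤ := by
    haveI : CompleteSpace (LinearMap.range M : Submodule 𝕜 H) := hclosed.completeSpace_coe
    rw [← (LinearMap.range M).orthogonal_orthogonal, horth, Submodule.bot_orthogonal_eq_top]
  obtain ⟨x, hx⟩ := Submodule.eq_top_iff'.mp this y
  exact ⟨x, by rw [← hMapp, hx]⟩

end LinearPMap

end Helpers3

section Helpers4

open Filter Topology RCLike

namespace LinearPMap

variable {𝕜 H : Type*} [RCLike 𝕜] [NormedAddCommGroup H] [InnerProductSpace 𝕜 H]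
  [CompleteSpace H]

local notation "⟪" x ", " y "⟫" => @inner 𝕜 _ _ x y

/-- Abstract form of Nelson's corollary: if `T`, `C` are symmetric on a common dense domain,
`C` is nonnegative and essentially selfadjoint, `‖Tx‖² ≤ c·re⟪Cx,x⟫` and `T` commutes weakly
with `C`, then `T` is essentially selfadjoint. -/
theorem ess_selfadjoint_abstract (T C : H →ₗ.[𝕜] H) (c : ℝ)
    (hdense : Dense (T.domain : Set H))
    (hTC : T.domain ≤ C.domain) (hCT : C.domain ≤ T.domain)
    (hTsymm : T.IsSymmetricOp) (hCsymm : C.IsSymmetricOp)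
    (hbound : ∀ (x : H) (hT : x ∈ T.domain) (hC : x ∈ C.domain),
      ‖T ⟨x, hT⟩‖ ^ 2 ≤ c * re ⟪C ⟨x, hC⟩, x⟫)
    (hcomm : ∀ (x y : H) (hTx : x ∈ T.domain) (hCx : x ∈ C.domain)
      (hTy : y ∈ T.domain) (hCy : y ∈ C.domain),
      ⟪T ⟨x, hTx⟩, C ⟨y, hCy⟩⟫ = ⟪C ⟨x, hCx⟩, T ⟨y, hTy⟩⟫)
    (hpos : ∀ (x : H) (hC : x ∈ C.domain), 0 ≤ re ⟪C ⟨x, hC⟩, x⟫)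
    (hCess : C.IsEssSelfAdjointOp) :
    T.IsEssSelfAdjointOp := by
  obtain ⟨hCclosable, hNdense, hNadj⟩ := hCess
  set N := C.closure with hNdef
  have hNclosed : N.IsClosed := hCclosable.closure_isClosed
  have hCN : C ≤ N := C.le_closure
  -- graph-approximating sequences for N
  have hseq : ∀ u : N.domain, ∃ d : ℕ → C.domain,
      Tendsto (fun n => ((d n : H))) atTop (𝓝 u) ∧
      Tendsto (fun n => C (d n)) atTop (𝓝 (N u)) := by
    intro u
    obtain ⟨d, hd⟩ := closure_graph_seq hCclosable (N.mem_graph u)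
    exact ⟨d, (continuous_fst.tendsto _).comp hd, (continuous_snd.tendsto _).comp hd⟩
  -- N is symmetric
  have hNsymm : ∀ u v : N.domain, ⟪N u, (v : H)⟫ = ⟪(u : H), N v⟫ := by
    intro u v
    obtain ⟨d, hd1, hd2⟩ := hseq u
    obtain ⟨e, he1, he2⟩ := hseq v
    have hlim1 : Tendsto (fun n => ⟪C (d n), ((e n : H))⟫) atTop (𝓝 ⟪N u, (v : H)⟫) :=
      hd2.inner he1
    have hlim2 : Tendsto (fun n => ⟪((d n : H)), C (e n)⟫) atTop (𝓝 ⟪(u : H), N v⟫) :=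
      hd1.inner he2
    exact tendsto_nhds_unique (hlim1.congr fun n => hCsymm (d n) (e n)) hlim2
  -- N is nonnegative
  have hNpos : ∀ u : N.domain, 0 ≤ re ⟪N u, (u : H)⟫ := by
    intro u
    obtain ⟨d, hd1, hd2⟩ := hseq u
    have hlim : Tendsto (fun n => re ⟪C (d n), ((d n : H))⟫) atTop (𝓝 (re ⟪N u, (u : H)⟫)) :=
      (RCLike.continuous_re.tendsto _).comp (hd2.inner hd1)
    exact ge_of_tendsto' hlim fun n => hpos (d n) (d n).2
  -- T is closable
  have hTclosable : T.IsClosable := isClosable_of_symmetric hdense hTsymm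
  set Tc := T.closure with hTcdef
  have hTcle : T ≤ Tc := T.le_closure
  have hTcdense : Dense (Tc.domain : Set H) := hdense.mono hTcle.1
  have hTcclosed : Tc.IsClosed := hTclosable.closure_isClosed
  -- difference bound on T over C.domain
  have hdiff : ∀ p q : C.domain, ‖T ⟨p, hCT p.2⟩ - T ⟨q, hCT q.2⟩‖ ^ 2
      ≤ c * re ⟪C p - C q, ((p : H)) - q⟫ := by
    intro p q
    have hmemT : ((p : H)) - q ∈ T.domain := sub_mem (hCT p.2) (hCT q.2)
    have hmemC : ((p : H)) - q ∈ C.domain := sub_mem p.2 q.2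
    have h1 : T ⟨((p : H)) - q, hmemT⟩ = T ⟨p, hCT p.2⟩ - T ⟨q, hCT q.2⟩ := by
      have : (⟨((p : H)) - q, hmemT⟩ : T.domain) = ⟨p, hCT p.2⟩ - ⟨q, hCT q.2⟩ :=
        Subtype.ext (by simp)
      rw [this]
      exact _root_.map_sub T.toFun _ _
    have h2 : C ⟨((p : H)) - q, hmemC⟩ = C p - C q := by
      have : (⟨((p : H)) - q, hmemC⟩ : C.domain) = p - q := Subtype.ext (by simp)
      rw [this]
      exact _root_.map_sub C.toFun _ _
    have := hbound (((p : H)) - q) hmemT hmemC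
    rwa [h1, h2] at this
  -- extension of T to the domain of N
  have hext : ∀ u : N.domain, ∃ w : H, ((u : H), w) ∈ Tc.graph ∧
      ∃ d : ℕ → C.domain,
        Tendsto (fun n => ((d n : H))) atTop (𝓝 u) ∧
        Tendsto (fun n => C (d n)) atTop (𝓝 (N u)) ∧
        Tendsto (fun n => T ⟨d n, hCT (d n).2⟩) atTop (𝓝 w) := by
    intro u
    obtain ⟨d, hd1, hd2⟩ := hseq u
    set S : ℕ → H := fun n => T ⟨d n, hCT (d n).2⟩ with hS
    have hgd : Tendsto (fun pr : ℕ × ℕ => ((d pr.1 : H)) - d pr.2) (atTop ×ˢ atTop) (𝓝 0) := by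
      have := (hd1.comp tendsto_fst).sub (hd1.comp tendsto_snd)
      simpa using this
    have hgC : Tendsto (fun pr : ℕ × ℕ => C (d pr.1) - C (d pr.2)) (atTop ×ˢ atTop) (𝓝 0) := by
      have := (hd2.comp tendsto_fst).sub (hd2.comp tendsto_snd)
      simpa using this
    have hg0 : Tendsto (fun pr : ℕ × ℕ =>
        c * re ⟪C (d pr.1) - C (d pr.2), ((d pr.1 : H)) - d pr.2⟫) (atTop ×ˢ atTop) (𝓝 0) := by
      have hre : Tendsto (fun pr : ℕ × ℕ =>
          re ⟪C (d pr.1) - C (d pr.2), ((d pr.1 : H)) - d pr.2⟫) (atTop ×ˢ atTop)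
          (𝓝 (re ⟪(0 : H), (0 : H)⟫)) := (RCLike.continuous_re.tendsto _).comp (hgC.inner hgd)
      have := hre.const_mul c
      simpa using this
    have hcauchy : CauchySeq S := by
      rw [Metric.cauchySeq_iff]
      intro ε hε
      have hev : ∀ᶠ pr : ℕ × ℕ in atTop ×ˢ atTop,
          c * re ⟪C (d pr.1) - C (d pr.2), ((d pr.1 : H)) - d pr.2⟫ < ε ^ 2 := by
        have hε2 : (0 : ℝ) < ε ^ 2 := by positivity
        exact hg0.eventually_lt_const hε2
      rw [prod_atTop_atTop_eq, eventually_atTop] at hev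
      obtain ⟨a, ha⟩ := hev
      refine ⟨max a.1 a.2, fun m hm n hn => ?_⟩
      have h1 := ha (m, n) ⟨le_trans (le_max_left _ _) hm, le_trans (le_max_right _ _) hn⟩
      have h2 := hdiff (d m) (d n)
      have h3 : ‖S m - S n‖ ^ 2 < ε ^ 2 := lt_of_le_of_lt h2 h1
      rw [dist_eq_norm]
      exact lt_of_pow_lt_pow_left₀ 2 (le_of_lt hε) h3
    obtain ⟨w, hw⟩ := cauchySeq_tendsto_of_complete hcauchy
    refine ⟨w, ?_, d, hd1, hd2, hw⟩
    have hlim : Tendsto (fun n => (((d n : H)), S n)) atTop (𝓝 ((u : H), w)) :=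
      hd1.prodMk_nhds hw
    have hmem : ∀ n, (((d n : H)), S n) ∈ (T.graph : Set (H × H)) := fun n =>
      T.mem_graph ⟨d n, hCT (d n).2⟩
    have hcl : ((u : H), w) ∈ _root_.closure (T.graph : Set (H × H)) :=
      mem_closure_of_tendsto hlim (Filter.Eventually.of_forall hmem)
    have := hTclosable.graph_closure_eq_closure_graph
    rw [← this]
    rwa [← Submodule.topologicalClosure_coe, SetLike.mem_coe] at hcl
  choose W hWgr d hd1 hd2 hd3 using hext
  have hWmem : ∀ u : N.domain, (u : H) ∈ Tc.domain := fun u =>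
    mem_domain_of_mem_graph (hWgr u)
  have hWval : ∀ u : N.domain, Tc ⟨(u : H), hWmem u⟩ = W u := fun u =>
    graph_val (hWgr u) (hWmem u)
  -- extended commutation and symmetry
  have hWcomm : ∀ u v : N.domain, ⟪W u, N v⟫ = ⟪N u, W v⟫ := by
    intro u v
    have hlim1 : Tendsto (fun n => ⟪T ⟨d u n, hCT (d u n).2⟩, C (d v n)⟫) atTop
        (𝓝 ⟪W u, N v⟫) := (hd3 u).inner (hd2 v)
    have hlim2 : Tendsto (fun n => ⟪C (d u n), T ⟨d v n, hCT (d v n).2⟩⟫) atTop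
        (𝓝 ⟪N u, W v⟫) := (hd2 u).inner (hd3 v)
    refine tendsto_nhds_unique (hlim1.congr fun n => ?_) hlim2
    exact hcomm _ _ (hCT (d u n).2) (d u n).2 (hCT (d v n).2) (d v n).2
  have hWsymm : ∀ u v : N.domain, ⟪W u, (v : H)⟫ = ⟪(u : H), W v⟫ := by
    intro u v
    have hlim1 : Tendsto (fun n => ⟪T ⟨d u n, hCT (d u n).2⟩, ((d v n : H))⟫) atTop
        (𝓝 ⟪W u, (v : H)⟫) := (hd3 u).inner (hd1 v)
    have hlim2 : Tendsto (fun n => ⟪((d u n : H)), T ⟨d v n, hCT (d v n).2⟩⟫) atTop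
        (𝓝 ⟪(u : H), W v⟫) := (hd1 u).inner (hd3 v)
    exact tendsto_nhds_unique
      (hlim1.congr fun n => hTsymm ⟨d u n, hCT (d u n).2⟩ ⟨d v n, hCT (d v n).2⟩) hlim2
  -- Tc is symmetric
  have hTcsymm : ∀ x y : Tc.domain, ⟪Tc x, (y : H)⟫ = ⟪(x : H), Tc y⟫ := by
    intro x y
    obtain ⟨dx, hdx⟩ := closure_graph_seq hTclosable (Tc.mem_graph x)
    obtain ⟨dy, hdy⟩ := closure_graph_seq hTclosable (Tc.mem_graph y)
    have hx1 : Tendsto (fun n => ((dx n : H))) atTop (𝓝 x) := (continuous_fst.tendsto _).comp hdx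
    have hx2 : Tendsto (fun n => T (dx n)) atTop (𝓝 (Tc x)) := (continuous_snd.tendsto _).comp hdx
    have hy1 : Tendsto (fun n => ((dy n : H))) atTop (𝓝 y) := (continuous_fst.tendsto _).comp hdy
    have hy2 : Tendsto (fun n => T (dy n)) atTop (𝓝 (Tc y)) := (continuous_snd.tendsto _).comp hdy
    exact tendsto_nhds_unique ((hx2.inner hy1).congr fun n => hTsymm _ _) (hx1.inner hy2)
  -- resolvents
  have hres : ∀ t : ℝ, 0 < t → ∀ y : H, ∃ x : N.domain, (x : H) + (t : 𝕜) • N x = y :=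
    fun t ht y => resolvent_surjective hNdense hNclosed hNadj hNpos ht y
  choose! R hR using hres
  have hNsub : ∀ x y : N.domain, N (x - y) = N x - N y := fun x y => _root_.map_sub N.toFun x y
  have hRuniq : ∀ (t : ℝ), 0 < t → ∀ (x x' : N.domain),
      (x : H) + (t : 𝕜) • N x = (x' : H) + (t : 𝕜) • N x' → x = x' := by
    intro t ht x x' hxx
    have hlow := resolvent_lower_bound hNpos ht (x - x')
    have hval : ((x - x' : N.domain) : H) + (t : 𝕜) • N (x - x') = 0 := by
      rw [hNsub]
      push_cast
      rw [smul_sub]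
      rw [show ((x : H) - x') + ((t : 𝕜) • N x - (t : 𝕜) • N x')
        = ((x : H) + (t : 𝕜) • N x) - ((x' : H) + (t : 𝕜) • N x') by abel, hxx]
      simp
    rw [hval, norm_zero] at hlow
    have hc0 : ((x - x' : N.domain) : H) = 0 := norm_le_zero_iff.mp hlow
    have hcoe : (x : H) - x' = 0 := by rwa [Submodule.coe_sub] at hc0
    exact Subtype.ext (sub_eq_zero.mp hcoe)
  -- symmetry of the resolvent
  have hRsymm : ∀ (t : ℝ), 0 < t → ∀ u v : H, ⟪(R t u : H), v⟫ = ⟪u, (R t v : H)⟫ := by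
    intro t ht u v
    calc ⟪(R t u : H), v⟫ = ⟪(R t u : H), (R t v : H) + (t : 𝕜) • N (R t v)⟫ := by
          rw [hR t ht v]
      _ = ⟪(R t u : H), (R t v : H)⟫ + (t : 𝕜) * ⟪(R t u : H), N (R t v)⟫ := by
          rw [inner_add_right, inner_smul_right]
      _ = ⟪(R t u : H), (R t v : H)⟫ + (t : 𝕜) * ⟪N (R t u), (R t v : H)⟫ := by
          rw [← hNsymm (R t u) (R t v)]
      _ = ⟪(R t u : H) + (t : 𝕜) • N (R t u), (R t v : H)⟫ := by
          rw [inner_add_left, inner_smul_left, conj_ofReal]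
      _ = ⟪u, (R t v : H)⟫ := by rw [hR t ht u]
  -- contraction property
  have hRcontract : ∀ (t : ℝ), 0 < t → ∀ u v : H, ‖(R t u : H) - R t v‖ ≤ ‖u - v‖ := by
    intro t ht u v
    have hlow := resolvent_lower_bound hNpos ht (R t u - R t v)
    have hval : ((R t u - R t v : N.domain) : H) + (t : 𝕜) • N (R t u - R t v) = u - v := by
      rw [hNsub]
      push_cast
      rw [smul_sub]
      rw [show ((R t u : H) - R t v) + ((t : 𝕜) • N (R t u) - (t : 𝕜) • N (R t v))
        = ((R t u : H) + (t : 𝕜) • N (R t u)) - ((R t v : H) + (t : 𝕜) • N (R t v)) by abel,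
        hR t ht u, hR t ht v]
    rw [hval] at hlow
    rwa [Submodule.coe_sub] at hlow
  -- strong convergence of the resolvents
  have htpos : ∀ n : ℕ, (0 : ℝ) < 1 / (n + 1) := fun n => by positivity
  have hRlim : ∀ u : H, Tendsto (fun n : ℕ => (R (1 / (n + 1)) u : H)) atTop (𝓝 u) := by
    intro u
    rw [Metric.tendsto_atTop]
    intro ε hε
    have hu : u ∈ _root_.closure (T.domain : Set H) := hdense u
    obtain ⟨x, hxmem, hxd⟩ := Metric.mem_closure_iff.mp hu (ε / 4) (by positivity)
    have hxN : x ∈ N.domain := hCN.1 (hTC hxmem)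
    set xN : N.domain := ⟨x, hxN⟩ with hxNdef
    obtain ⟨n₀, hn₀⟩ := exists_nat_gt (4 * ‖N xN‖ / ε)
    refine ⟨n₀, fun n hn => ?_⟩
    set t := (1 : ℝ) / (n + 1) with htdef
    have ht : 0 < t := htpos n
    have hRMx : R t ((xN : H) + (t : 𝕜) • N xN) = xN :=
      hRuniq t ht _ _ (hR t ht ((xN : H) + (t : 𝕜) • N xN))
    have h1 : ‖(R t u : H) - xN‖ ≤ ‖u - ((xN : H) + (t : 𝕜) • N xN)‖ := by
      have := hRcontract t ht u ((xN : H) + (t : 𝕜) • N xN)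
      rwa [hRMx] at this
    have h2 : ‖u - ((xN : H) + (t : 𝕜) • N xN)‖ ≤ ‖u - x‖ + t * ‖N xN‖ := by
      have : u - ((xN : H) + (t : 𝕜) • N xN) = (u - x) - (t : 𝕜) • N xN := by
        simp [xN]; abel
      rw [this]
      refine le_trans (norm_sub_le _ _) ?_
      have : ‖(t : 𝕜) • N xN‖ = t * ‖N xN‖ := by
        rw [norm_smul, RCLike.norm_ofReal, abs_of_pos ht]
      rw [this]
    have h3 : ‖(R t u : H) - u‖ ≤ ‖(R t u : H) - xN‖ + ‖(xN : H) - u‖ := by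
      have : (R t u : H) - u = ((R t u : H) - xN) + ((xN : H) - u) := by abel
      rw [this]
      exact norm_add_le _ _
    have hdist : dist u x < ε / 4 := hxd
    have hxu : ‖u - x‖ < ε / 4 := by rwa [← dist_eq_norm]
    have hxu' : ‖(xN : H) - u‖ < ε / 4 := by
      rw [show ((xN : H)) = x from rfl, norm_sub_rev]
      exact hxu
    have hn1 : 4 * ‖N xN‖ / ε < (n : ℝ) + 1 := by
      have hcast : (n₀ : ℝ) ≤ (n : ℝ) := by exact_mod_cast hn
      linarith
    have ht4 : t * ‖N xN‖ < ε / 4 := by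
      have hmul : 4 * ‖N xN‖ < ((n : ℝ) + 1) * ε := (div_lt_iff₀ hε).mp hn1
      rw [htdef, div_mul_eq_mul_div, one_mul, div_lt_div_iff₀ (by positivity) (by norm_num : (0:ℝ) < 4)]
      linarith
    have hfinal : ‖(R t u : H) - u‖ < ε := by
      have := h3
      have h12 : ‖(R t u : H) - xN‖ < ε / 4 + ε / 4 := by
        have := le_trans h1 h2
        linarith
      linarith
    rw [dist_eq_norm]
    exact hfinal
  -- conclusion
  refine ⟨hTclosable, hTcdense, ?_⟩
  have hTcfa : Tc.IsFormalAdjoint Tc := fun x y => hTcsymm x y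
  have hle : Tc ≤ Tc.adjoint := hTcfa.le_adjoint hTcdense
  have hkey : ∀ u : Tc.adjoint.domain, ((u : H), Tc.adjoint u) ∈ Tc.graph := by
    intro u
    set w := Tc.adjoint u with hwdef
    have hw : ∀ y : Tc.domain, ⟪w, (y : H)⟫ = ⟪(u : H), Tc y⟫ := fun y =>
      adjoint_isFormalAdjoint hTcdense u y
    have hclaim : ∀ (t : ℝ), 0 < t → W (R t (u : H)) = (R t w : H) := by
      intro t ht
      apply ext_inner_right 𝕜
      intro z
      calc ⟪W (R t (u : H)), z⟫
          = ⟪W (R t (u : H)), ((R t z : H) + (t : 𝕜) • N (R t z))⟫ := by rw [hR t ht z]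
        _ = ⟪W (R t (u : H)), ((R t z : H))⟫ + (t : 𝕜) * ⟪W (R t (u : H)), N (R t z)⟫ := by
            rw [inner_add_right, inner_smul_right]
        _ = ⟪((R t (u : H) : H)), W (R t z)⟫ + (t : 𝕜) * ⟪N (R t (u : H)), W (R t z)⟫ := by
            rw [hWsymm, hWcomm]
        _ = ⟪((R t (u : H) : H)) + (t : 𝕜) • N (R t (u : H)), W (R t z)⟫ := by
            rw [inner_add_left, inner_smul_left, conj_ofReal]
        _ = ⟪(u : H), W (R t z)⟫ := by rw [hR t ht (u : H)]
        _ = ⟪(u : H), Tc ⟨((R t z : H)), hWmem (R t z)⟩⟫ := by rw [hWval]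
        _ = ⟪w, ((R t z : H))⟫ := (hw ⟨((R t z : H)), hWmem (R t z)⟩).symm
        _ = ⟪(R t w : H), z⟫ := (hRsymm t ht w z).symm
    have h2 : Tendsto (fun n : ℕ => W (R (1 / (n + 1)) (u : H))) atTop (𝓝 w) :=
      Filter.Tendsto.congr (fun n => (hclaim _ (htpos n)).symm) (hRlim w)
    have hlimpair : Tendsto
        (fun n : ℕ => (((R (1 / (n + 1)) (u : H) : H)), W (R (1 / (n + 1)) (u : H))))
        atTop (𝓝 ((u : H), w)) := (hRlim (u : H)).prodMk_nhds h2
    have hmem : ∀ n : ℕ, (((R (1 / (n + 1)) (u : H) : H)), W (R (1 / (n + 1)) (u : H)))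
        ∈ (Tc.graph : Set (H × H)) := fun n => hWgr _
    exact SetLike.mem_coe.mp
      (hTcclosed.mem_of_tendsto hlimpair (Filter.Eventually.of_forall hmem))
  have hge : Tc.adjoint ≤ Tc := by
    refine ⟨fun x hx => mem_domain_of_mem_graph (hkey ⟨x, hx⟩), ?_⟩
    intro x y hxy
    exact Tc.mem_graph_snd_inj (hkey x) (Tc.mem_graph y) hxy
  exact le_antisymm hge hle

end LinearPMap

end Helpers4

section Final

open Filter Topology RCLike LinearPMap

variable {𝕜 H : Type*} [RCLike 𝕜] [NormedAddCommGroup H] [InnerProductSpace 𝕜 H]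
  [CompleteSpace H]

local notation "⟪" x ", " y "⟫" => @inner 𝕜 _ _ x y

theorem nelson_essentially_selfadjoint' (A B : H →ₗ.[𝕜] H)
    (hAsymm : A.IsSymmetricOp) (hBsymm : B.IsSymmetricOp)
    (𝒟 : Submodule 𝕜 H) (hdense : Dense (𝒟 : Set H))
    (h𝒟A : 𝒟 ≤ A.domain) (h𝒟B : 𝒟 ≤ B.domain)
    (h𝒟AB : 𝒟 ≤ (A.pcomp B).domain) (h𝒟BA : 𝒟 ≤ (B.pcomp A).domain)
    (h𝒟AA : 𝒟 ≤ (A.pcomp A).domain) (h𝒟BB : 𝒟 ≤ (B.pcomp B).domain)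
    (hcomm : ∀ x : 𝒟, (A.pcomp B) ⟨x.1, h𝒟AB x.2⟩ = (B.pcomp A) ⟨x.1, h𝒟BA x.2⟩)
    (hC : ((A.pcomp A + B.pcomp B).domRestrict 𝒟).IsEssSelfAdjointOp)
    (a b : ℝ) : (((a : 𝕜) • A + (b : 𝕜) • B).domRestrict 𝒟).IsEssSelfAdjointOp := by
  set T := ((a : 𝕜) • A + (b : 𝕜) • B).domRestrict 𝒟 with hTdef
  set C := (A.pcomp A + B.pcomp B).domRestrict 𝒟 with hCdef
  -- canonical memberships
  have hAA : ∀ (x : H) (hx : x ∈ 𝒟), A ⟨x, h𝒟A hx⟩ ∈ A.domain := fun x hx => by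
    obtain ⟨h1, h2⟩ := mem_pcomp_domain (h𝒟AA hx); exact h2
  have hBB : ∀ (x : H) (hx : x ∈ 𝒟), B ⟨x, h𝒟B hx⟩ ∈ B.domain := fun x hx => by
    obtain ⟨h1, h2⟩ := mem_pcomp_domain (h𝒟BB hx); exact h2
  have hAB : ∀ (x : H) (hx : x ∈ 𝒟), B ⟨x, h𝒟B hx⟩ ∈ A.domain := fun x hx => by
    obtain ⟨h1, h2⟩ := mem_pcomp_domain (h𝒟AB hx); exact h2
  have hBA : ∀ (x : H) (hx : x ∈ 𝒟), A ⟨x, h𝒟A hx⟩ ∈ B.domain := fun x hx => by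
    obtain ⟨h1, h2⟩ := mem_pcomp_domain (h𝒟BA hx); exact h2
  have hTmem : ∀ x ∈ 𝒟, x ∈ T.domain := fun x hx => ⟨hx, h𝒟A hx, h𝒟B hx⟩
  have hCmem : ∀ x ∈ 𝒟, x ∈ C.domain := fun x hx => ⟨hx, h𝒟AA hx, h𝒟BB hx⟩
  have hTD : T.domain ≤ 𝒟 := fun x hx => hx.1
  have hCD : C.domain ≤ 𝒟 := fun x hx => hx.1
  -- commutation in applied form
  have hcomm' : ∀ (x : H) (hx : x ∈ 𝒟),
      A ⟨B ⟨x, h𝒟B hx⟩, hAB x hx⟩ = B ⟨A ⟨x, h𝒟A hx⟩, hBA x hx⟩ := by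
    intro x hx
    have h1 := hcomm ⟨x, hx⟩
    rw [pcomp_apply ⟨x, h𝒟AB hx⟩ (h𝒟B hx) (hAB x hx)] at h1
    rw [pcomp_apply ⟨x, h𝒟BA hx⟩ (h𝒟A hx) (hBA x hx)] at h1
    exact h1
  -- value lemmas
  have hTval : ∀ (x : H) (hx : x ∈ 𝒟) (hT : x ∈ T.domain),
      T ⟨x, hT⟩ = (a : 𝕜) • A ⟨x, h𝒟A hx⟩ + (b : 𝕜) • B ⟨x, h𝒟B hx⟩ := by
    intro x hx hT
    have h1 : T ⟨x, hT⟩ = ((a : 𝕜) • A + (b : 𝕜) • B) ⟨x, ⟨h𝒟A hx, h𝒟B hx⟩⟩ :=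
      domRestrict_apply rfl
    rw [h1, LinearPMap.add_apply, LinearPMap.smul_apply, LinearPMap.smul_apply]
  have hCval : ∀ (x : H) (hx : x ∈ 𝒟) (hCx : x ∈ C.domain),
      C ⟨x, hCx⟩ = A ⟨A ⟨x, h𝒟A hx⟩, hAA x hx⟩ + B ⟨B ⟨x, h𝒟B hx⟩, hBB x hx⟩ := by
    intro x hx hCx
    have h1 : C ⟨x, hCx⟩ = (A.pcomp A + B.pcomp B) ⟨x, ⟨h𝒟AA hx, h𝒟BB hx⟩⟩ :=
      domRestrict_apply rfl
    rw [h1, LinearPMap.add_apply, pcomp_apply ⟨x, h𝒟AA hx⟩ (h𝒟A hx) (hAA x hx),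
      pcomp_apply ⟨x, h𝒟BB hx⟩ (h𝒟B hx) (hBB x hx)]
  -- the quadratic form of C
  have hCre : ∀ (x : H) (hx : x ∈ 𝒟) (hCx : x ∈ C.domain),
      re ⟪C ⟨x, hCx⟩, x⟫ = ‖A ⟨x, h𝒟A hx⟩‖ ^ 2 + ‖B ⟨x, h𝒟B hx⟩‖ ^ 2 := by
    intro x hx hCx
    rw [hCval x hx hCx, inner_add_left]
    have h1 : ⟪A ⟨A ⟨x, h𝒟A hx⟩, hAA x hx⟩, x⟫ = ⟪A ⟨x, h𝒟A hx⟩, A ⟨x, h𝒟A hx⟩⟫ :=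
      hAsymm ⟨A ⟨x, h𝒟A hx⟩, hAA x hx⟩ ⟨x, h𝒟A hx⟩
    have h2 : ⟪B ⟨B ⟨x, h𝒟B hx⟩, hBB x hx⟩, x⟫ = ⟪B ⟨x, h𝒟B hx⟩, B ⟨x, h𝒟B hx⟩⟫ :=
      hBsymm ⟨B ⟨x, h𝒟B hx⟩, hBB x hx⟩ ⟨x, h𝒟B hx⟩
    rw [_root_.map_add, h1, h2, inner_self_eq_norm_sq, inner_self_eq_norm_sq]
  -- apply the abstract theorem
  apply ess_selfadjoint_abstract T C (a ^ 2 + b ^ 2)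
  · exact hdense.mono (fun x hx => hTmem x hx)
  · exact fun x hx => hCmem x (hTD hx)
  · exact fun x hx => hTmem x (hCD hx)
  · -- T symmetric
    intro x y
    have hx := hTD x.2
    have hy := hTD y.2
    have hxe : x = ⟨(x : H), hTmem _ hx⟩ := Subtype.ext rfl
    have hye : y = ⟨(y : H), hTmem _ hy⟩ := Subtype.ext rfl
    rw [hxe, hye, hTval _ hx, hTval _ hy]
    rw [inner_add_left, inner_add_right, inner_smul_left, inner_smul_left,
      inner_smul_right, inner_smul_right,
      hAsymm ⟨(x : H), h𝒟A hx⟩ ⟨(y : H), h𝒟A hy⟩,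
      hBsymm ⟨(x : H), h𝒟B hx⟩ ⟨(y : H), h𝒟B hy⟩]
    simp only [conj_ofReal]
  · -- C symmetric
    intro x y
    have hx := hCD x.2
    have hy := hCD y.2
    have hxe : x = ⟨(x : H), hCmem _ hx⟩ := Subtype.ext rfl
    have hye : y = ⟨(y : H), hCmem _ hy⟩ := Subtype.ext rfl
    rw [hxe, hye, hCval _ hx, hCval _ hy, inner_add_left, inner_add_right]
    have h1 : ⟪A ⟨A ⟨(x:H), h𝒟A hx⟩, hAA _ hx⟩, (y : H)⟫
        = ⟪(x : H), A ⟨A ⟨(y:H), h𝒟A hy⟩, hAA _ hy⟩⟫ := by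
      rw [hAsymm ⟨A ⟨(x:H), h𝒟A hx⟩, hAA _ hx⟩ ⟨(y:H), h𝒟A hy⟩,
        hAsymm ⟨(x:H), h𝒟A hx⟩ ⟨A ⟨(y:H), h𝒟A hy⟩, hAA _ hy⟩]
    have h2 : ⟪B ⟨B ⟨(x:H), h𝒟B hx⟩, hBB _ hx⟩, (y : H)⟫
        = ⟪(x : H), B ⟨B ⟨(y:H), h𝒟B hy⟩, hBB _ hy⟩⟫ := by
      rw [hBsymm ⟨B ⟨(x:H), h𝒟B hx⟩, hBB _ hx⟩ ⟨(y:H), h𝒟B hy⟩,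
        hBsymm ⟨(x:H), h𝒟B hx⟩ ⟨B ⟨(y:H), h𝒟B hy⟩, hBB _ hy⟩]
    rw [h1, h2]
  · -- the bound
    intro x hT hCx
    have hx := hTD hT
    have hxe : (⟨x, hT⟩ : T.domain) = ⟨x, hTmem _ hx⟩ := Subtype.ext rfl
    rw [hxe, hTval _ hx, hCre _ hx]
    set ax := A ⟨x, h𝒟A hx⟩
    set bx := B ⟨x, h𝒟B hx⟩
    have hCS : |re ⟪ax, bx⟫| ≤ ‖ax‖ * ‖bx‖ :=
      le_trans (abs_re_le_norm _) (norm_inner_le_norm _ _)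
    have hexp : ‖(a : 𝕜) • ax + (b : 𝕜) • bx‖ ^ 2
        = a ^ 2 * ‖ax‖ ^ 2 + 2 * (a * b * re ⟪ax, bx⟫) + b ^ 2 * ‖bx‖ ^ 2 := by
      rw [@norm_add_sq 𝕜, inner_smul_left, inner_smul_right, conj_ofReal]
      rw [norm_smul, norm_smul, RCLike.norm_ofReal, RCLike.norm_ofReal]
      rw [show ((a : 𝕜) * ((b : 𝕜) * ⟪ax, bx⟫)) = (((a * b : ℝ) : 𝕜) * ⟪ax, bx⟫) by push_cast; ring]
      rw [re_ofReal_mul]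
      all_goals rw [mul_pow, mul_pow, sq_abs, sq_abs]
      all_goals ring
    rw [hexp]
    obtain ⟨hc1, hc2⟩ := abs_le.mp hCS
    have key2 : 2 * (a * b * re ⟪ax, bx⟫) ≤ a ^ 2 * ‖bx‖ ^ 2 + b ^ 2 * ‖ax‖ ^ 2 := by
      rcases le_or_gt 0 (a * b) with hab | hab
      · have h2a : (2 * (a * b)) * re ⟪ax, bx⟫ ≤ (2 * (a * b)) * (‖ax‖ * ‖bx‖) :=
          mul_le_mul_of_nonneg_left hc2 (by linarith)
        nlinarith [sq_nonneg (a * ‖bx‖ - b * ‖ax‖)]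
      · have h2b : (2 * (a * b)) * re ⟪ax, bx⟫ ≤ (2 * (a * b)) * (-(‖ax‖ * ‖bx‖)) :=
          mul_le_mul_of_nonpos_left hc1 (by linarith)
        nlinarith [sq_nonneg (a * ‖bx‖ + b * ‖ax‖)]
    nlinarith [key2]
  · -- commutation
    intro x y hTx hCx hTy hCy
    have hx := hTD hTx
    have hy := hTD hTy
    have hxe : (⟨x, hTx⟩ : T.domain) = ⟨x, hTmem _ hx⟩ := Subtype.ext rfl
    have hye : (⟨y, hTy⟩ : T.domain) = ⟨y, hTmem _ hy⟩ := Subtype.ext rfl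
    have hxe' : (⟨x, hCx⟩ : C.domain) = ⟨x, hCmem _ hx⟩ := Subtype.ext rfl
    have hye' : (⟨y, hCy⟩ : C.domain) = ⟨y, hCmem _ hy⟩ := Subtype.ext rfl
    rw [hxe, hye, hxe', hye', hTval _ hx, hTval _ hy, hCval _ hx, hCval _ hy]
    have e1 : ⟪A ⟨x, h𝒟A hx⟩, A ⟨A ⟨y, h𝒟A hy⟩, hAA _ hy⟩⟫
        = ⟪A ⟨A ⟨x, h𝒟A hx⟩, hAA _ hx⟩, A ⟨y, h𝒟A hy⟩⟫ :=
      (hAsymm ⟨A ⟨x, h𝒟A hx⟩, hAA _ hx⟩ ⟨A ⟨y, h𝒟A hy⟩, hAA _ hy⟩).symm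
    have e4 : ⟪B ⟨x, h𝒟B hx⟩, B ⟨B ⟨y, h𝒟B hy⟩, hBB _ hy⟩⟫
        = ⟪B ⟨B ⟨x, h𝒟B hx⟩, hBB _ hx⟩, B ⟨y, h𝒟B hy⟩⟫ :=
      (hBsymm ⟨B ⟨x, h𝒟B hx⟩, hBB _ hx⟩ ⟨B ⟨y, h𝒟B hy⟩, hBB _ hy⟩).symm
    have e2 : ⟪A ⟨x, h𝒟A hx⟩, B ⟨B ⟨y, h𝒟B hy⟩, hBB _ hy⟩⟫
        = ⟪B ⟨B ⟨x, h𝒟B hx⟩, hBB _ hx⟩, A ⟨y, h𝒟A hy⟩⟫ := by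
      calc ⟪A ⟨x, h𝒟A hx⟩, B ⟨B ⟨y, h𝒟B hy⟩, hBB _ hy⟩⟫
          = ⟪B ⟨A ⟨x, h𝒟A hx⟩, hBA _ hx⟩, B ⟨y, h𝒟B hy⟩⟫ :=
            (hBsymm ⟨A ⟨x, h𝒟A hx⟩, hBA _ hx⟩ ⟨B ⟨y, h𝒟B hy⟩, hBB _ hy⟩).symm
        _ = ⟪A ⟨B ⟨x, h𝒟B hx⟩, hAB _ hx⟩, B ⟨y, h𝒟B hy⟩⟫ := by rw [hcomm' x hx]
        _ = ⟪B ⟨x, h𝒟B hx⟩, A ⟨B ⟨y, h𝒟B hy⟩, hAB _ hy⟩⟫ :=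
            hAsymm ⟨B ⟨x, h𝒟B hx⟩, hAB _ hx⟩ ⟨B ⟨y, h𝒟B hy⟩, hAB _ hy⟩
        _ = ⟪B ⟨x, h𝒟B hx⟩, B ⟨A ⟨y, h𝒟A hy⟩, hBA _ hy⟩⟫ := by rw [hcomm' y hy]
        _ = ⟪B ⟨B ⟨x, h𝒟B hx⟩, hBB _ hx⟩, A ⟨y, h𝒟A hy⟩⟫ :=
            (hBsymm ⟨B ⟨x, h𝒟B hx⟩, hBB _ hx⟩ ⟨A ⟨y, h𝒟A hy⟩, hBA _ hy⟩).symm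
    have e3 : ⟪B ⟨x, h𝒟B hx⟩, A ⟨A ⟨y, h𝒟A hy⟩, hAA _ hy⟩⟫
        = ⟪A ⟨A ⟨x, h𝒟A hx⟩, hAA _ hx⟩, B ⟨y, h𝒟B hy⟩⟫ := by
      calc ⟪B ⟨x, h𝒟B hx⟩, A ⟨A ⟨y, h𝒟A hy⟩, hAA _ hy⟩⟫
          = ⟪A ⟨B ⟨x, h𝒟B hx⟩, hAB _ hx⟩, A ⟨y, h𝒟A hy⟩⟫ :=
            (hAsymm ⟨B ⟨x, h𝒟B hx⟩, hAB _ hx⟩ ⟨A ⟨y, h𝒟A hy⟩, hAA _ hy⟩).symm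
        _ = ⟪B ⟨A ⟨x, h𝒟A hx⟩, hBA _ hx⟩, A ⟨y, h𝒟A hy⟩⟫ := by rw [← hcomm' x hx]
        _ = ⟪A ⟨x, h𝒟A hx⟩, B ⟨A ⟨y, h𝒟A hy⟩, hBA _ hy⟩⟫ :=
            hBsymm ⟨A ⟨x, h𝒟A hx⟩, hBA _ hx⟩ ⟨A ⟨y, h𝒟A hy⟩, hBA _ hy⟩
        _ = ⟪A ⟨x, h𝒟A hx⟩, A ⟨B ⟨y, h𝒟B hy⟩, hAB _ hy⟩⟫ := by rw [hcomm' y hy]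
        _ = ⟪A ⟨A ⟨x, h𝒟A hx⟩, hAA _ hx⟩, B ⟨y, h𝒟B hy⟩⟫ :=
            (hAsymm ⟨A ⟨x, h𝒟A hx⟩, hAA _ hx⟩ ⟨B ⟨y, h𝒟B hy⟩, hAB _ hy⟩).symm
    simp only [inner_add_left, inner_add_right, inner_smul_left, inner_smul_right, conj_ofReal]
    linear_combination (a : 𝕜) * e1 + (a : 𝕜) * e2 + (b : 𝕜) * e3 + (b : 𝕜) * e4
  · -- positivity
    intro x hCx
    have hx := hCD hCx
    have hxe : (⟨x, hCx⟩ : C.domain) = ⟨x, hCmem _ hx⟩ := Subtype.ext rfl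
    rw [hxe, hCre _ hx]
    positivity
  · exact hC

end Final
/-- **Corollary (Nelson).** Let `A, B` be symmetric operators in a Hilbert space `H` and
let `𝒟` be a dense subspace contained in the domains of `A`, `B`, `AB`, `BA`, `A²` and
`B²`, on which `A B x = B A x`. If the restriction of `A² + B²` to `𝒟` is essentially
selfadjoint, then so are the restrictions of `A`, `B`, and of `a A + b B` for all real
`a, b`, to `𝒟`. -/

theorem nelson_essentially_selfadjoint {𝕜 H : Type*} [RCLike 𝕜]
    [NormedAddCommGroup H] [InnerProductSpace 𝕜 H] [CompleteSpace H]
    (A B : H →ₗ.[𝕜] H) (hAsymm : A.IsSymmetricOp) (hBsymm : B.IsSymmetricOp)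
    (𝒟 : Submodule 𝕜 H) (hdense : Dense (𝒟 : Set H))
    (h𝒟A : 𝒟 ≤ A.domain) (h𝒟B : 𝒟 ≤ B.domain)
    (h𝒟AB : 𝒟 ≤ (A.pcomp B).domain) (h𝒟BA : 𝒟 ≤ (B.pcomp A).domain)
    (h𝒟AA : 𝒟 ≤ (A.pcomp A).domain) (h𝒟BB : 𝒟 ≤ (B.pcomp B).domain)
    (hcomm : ∀ x : 𝒟, (A.pcomp B) ⟨x.1, h𝒟AB x.2⟩ = (B.pcomp A) ⟨x.1, h𝒟BA x.2⟩)
    (hC : ((A.pcomp A + B.pcomp B).domRestrict 𝒟).IsEssSelfAdjointOp) :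
    (A.domRestrict 𝒟).IsEssSelfAdjointOp ∧ (B.domRestrict 𝒟).IsEssSelfAdjointOp ∧
      ∀ a b : ℝ, (((a : 𝕜) • A + (b : 𝕜) • B).domRestrict 𝒟).IsEssSelfAdjointOp := by
  have key : ∀ a b : ℝ, (((a : 𝕜) • A + (b : 𝕜) • B).domRestrict 𝒟).IsEssSelfAdjointOp :=
    fun a b => nelson_essentially_selfadjoint' A B hAsymm hBsymm 𝒟 hdense h𝒟A h𝒟B
      h𝒟AB h𝒟BA h𝒟AA h𝒟BB hcomm hC a b
  refine ⟨?_, ?_, key⟩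
  · have hEA : A.domRestrict 𝒟 = ((((1 : ℝ) : 𝕜)) • A + (((0 : ℝ) : 𝕜)) • B).domRestrict 𝒟 := by
      refine LinearPMap.ext ?_ ?_
      · show 𝒟 ⊓ A.domain = 𝒟 ⊓ ((((1 : ℝ) : 𝕜)) • A + (((0 : ℝ) : 𝕜)) • B).domain
        rw [add_domain, smul_domain, smul_domain,
          inf_eq_left.mpr h𝒟A, inf_eq_left.mpr (le_inf h𝒟A h𝒟B)]
      · intro x hx hy
        have h1 : A.domRestrict 𝒟 ⟨x, hx⟩ = A ⟨x, hx.2⟩ := domRestrict_apply rfl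
        have h2 : ((((1 : ℝ) : 𝕜)) • A + (((0 : ℝ) : 𝕜)) • B).domRestrict 𝒟 ⟨x, hy⟩
            = ((((1 : ℝ) : 𝕜)) • A + (((0 : ℝ) : 𝕜)) • B) ⟨x, hy.2⟩ :=
          domRestrict_apply rfl
        rw [h1, h2, LinearPMap.add_apply, LinearPMap.smul_apply, LinearPMap.smul_apply]
        simp only [RCLike.ofReal_one, RCLike.ofReal_zero, one_smul, zero_smul, add_zero]
    rw [hEA]
    exact key 1 0
  · have hEB : B.domRestrict 𝒟 = ((((0 : ℝ) : 𝕜)) • A + (((1 : ℝ) : 𝕜)) • B).domRestrict 𝒟 := by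
      refine LinearPMap.ext ?_ ?_
      · show 𝒟 ⊓ B.domain = 𝒟 ⊓ ((((0 : ℝ) : 𝕜)) • A + (((1 : ℝ) : 𝕜)) • B).domain
        rw [add_domain, smul_domain, smul_domain,
          inf_eq_left.mpr h𝒟B, inf_eq_left.mpr (le_inf h𝒟A h𝒟B)]
      · intro x hx hy
        have h1 : B.domRestrict 𝒟 ⟨x, hx⟩ = B ⟨x, hx.2⟩ := domRestrict_apply rfl
        have h2 : ((((0 : ℝ) : 𝕜)) • A + (((1 : ℝ) : 𝕜)) • B).domRestrict 𝒟 ⟨x, hy⟩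
            = ((((0 : ℝ) : 𝕜)) • A + (((1 : ℝ) : 𝕜)) • B) ⟨x, hy.2⟩ :=
          domRestrict_apply rfl
        rw [h1, h2, LinearPMap.add_apply, LinearPMap.smul_apply, LinearPMap.smul_apply]
        simp only [RCLike.ofReal_one, RCLike.ofReal_zero, one_smul, zero_smul, zero_add]
    rw [hEB]
    exact key 0 1
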